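/- Let X be a topological space, m : X → ℝ lower semicontinuous, M : X → ℝ upper semicontinuous, with m(x) ≤ M(x) for all x, and suppose that for every nonempty open set U ⊆ X one has sup_{x∈U} m(x) = sup_{x∈U} M(x). Then the set {x ∈ X : m(x) ≠ M(x)} is meager in X. -/
import Mathlib


/-- If `m` is lower semicontinuous, `M` upper semicontinuous, `m ≤ M`, and the suprema
of `m` and `M` agree over every nonempty open set, then `{m ≠ M}` is meager. -/
theorem meagre_ne_of_lsc_usc_sup_eq
    {X : Type*} [TopologicalSpace X] (m M : X → ℝ)
    (hm : LowerSemicontinuous m) (hM : UpperSemicontinuous M)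
    (hle : ∀ x, m x ≤ M x)
    (hsup : ∀ U : Set X, IsOpen U → U.Nonempty →
      (⨆ x ∈ U, (m x : EReal)) = ⨆ x ∈ U, (M x : EReal)) :
    IsMeagre {x : X | m x ≠ M x} := by
  -- For each ε > 0, the set {x | m x + ε ≤ M x} is closed with empty interior.
  have key : ∀ ε : ℝ, 0 < ε → IsMeagre {x : X | m x + ε ≤ M x} := by
    intro ε hε
    set A : Set X := {x : X | m x + ε ≤ M x} with hA
    have hclosed : IsClosed A := by
      have hopen : IsOpen {x : X | M x < m x + ε} := by
        rw [isOpen_iff_mem_nhds]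
        intro x hx
        obtain ⟨c, hc1, hc2⟩ := exists_between (show M x < m x + ε from hx)
        filter_upwards [hM x c hc1, hm x (c - ε) (by linarith)] with y hy1 hy2
        show M y < m y + ε
        linarith
      have : A = {x : X | M x < m x + ε}ᶜ := by
        ext x; simp [hA, not_lt]
      rw [this]
      exact hopen.isClosed_compl
    have hint : interior A = ∅ := by
      by_contra h
      obtain ⟨x0, hx0⟩ := Set.nonempty_iff_ne_empty.mpr h
      set V : Set X := interior A ∩ {x : X | M x < M x0 + ε / 2} with hV
      have hVopen : IsOpen V := isOpen_interior.inter (hM.isOpen_preimage _)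
      have hx0V : x0 ∈ V := ⟨hx0, by simp; linarith⟩
      have hVne : V.Nonempty := ⟨x0, hx0V⟩
      have hsupm : (⨆ x ∈ V, (m x : EReal)) ≤ ((M x0 - ε / 2 : ℝ) : EReal) := by
        refine iSup₂_le fun x hx => ?_
        have h1 : m x + ε ≤ M x := (interior_subset hx.1 : x ∈ A)
        have h2 : M x < M x0 + ε / 2 := hx.2
        exact_mod_cast (by linarith : m x ≤ M x0 - ε / 2)
      have hsupM : ((M x0 : ℝ) : EReal) ≤ ⨆ x ∈ V, (M x : EReal) :=
        le_iSup₂ (f := fun x _ => (M x : EReal)) x0 hx0V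
      rw [← hsup V hVopen hVne] at hsupM
      have : ((M x0 : ℝ) : EReal) ≤ ((M x0 - ε / 2 : ℝ) : EReal) := hsupM.trans hsupm
      rw [EReal.coe_le_coe_iff] at this
      linarith
    rw [isMeagre_iff_countable_union_isNowhereDense]
    exact ⟨{A}, by
      simpa [hclosed.isNowhereDense_iff] using hint,
      Set.countable_singleton _, by simp⟩
  have hsub : {x : X | m x ≠ M x} ⊆ ⋃ n : ℕ, {x : X | m x + 1 / (n + 1) ≤ M x} := by
    intro x hx
    have hlt : m x < M x := lt_of_le_of_ne (hle x) hx
    obtain ⟨n, hn⟩ := exists_nat_one_div_lt (by linarith : 0 < M x - m x)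
    exact Set.mem_iUnion.mpr ⟨n, by simp only [Set.mem_setOf_eq]; linarith⟩
  exact (isMeagre_iUnion fun n => key _ (by positivity)).mono hsub
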